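/- Population is preserved by Γ: if the coefficients π^{(n)} satisfy π^{(n)}_{β'} = 0 for all non-populated β', and additionally π^{(n)}_β ≠ 0 implies [β] ≥ 0 or β = δ_n, then the induced endomorphism Γ maps the populated sector T into itself, and maps the sector T̃ := {π : π_β ≠ 0 ⟹ [β] ≥ 0} into itself; moreover for any n, D^n T ⊆ T̃. -/

import Mathlib

/-- Polynomial multiindices `n ∈ ℕ^{1+d}`. -/
abbrev PIdx (d : ℕ) := Fin (d + 1) →₀ ℕ

/-- Multiindices `β` over the variables `z_k` (`k : ℕ`, left summand) and `z_n`
(`n ∈ ℕ^{1+d}`, right summand), indexing the monomials `z^β` of `ℝ[[z_k, z_n]]`. -/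
abbrev MIdx (d : ℕ) := (ℕ ⊕ PIdx d) →₀ ℕ

/-- Parabolic degree `|n| = 2 n₀ + n₁ + ⋯ + n_d`. -/
def pDeg {d : ℕ} (n : PIdx d) : ℕ := n 0 + n.sum fun _ v => v

/-- `Σ_k β(k)`. -/
def kSum {d : ℕ} (β : MIdx d) : ℕ :=
  β.sum fun j m => match j with
    | Sum.inl _ => m
    | Sum.inr _ => 0

/-- `Σ_n β(n)`. -/
def nSum {d : ℕ} (β : MIdx d) : ℕ :=
  β.sum fun j m => match j with
    | Sum.inl _ => 0
    | Sum.inr _ => m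

/-- `Σ_n |n| β(n)`. -/
def npSum {d : ℕ} (β : MIdx d) : ℕ :=
  β.sum fun j m => match j with
    | Sum.inl _ => 0
    | Sum.inr n => pDeg n * m

/-- The bracket `[β] = Σ_k (k−1) β(k) − Σ_n β(n)`. -/
def brk {d : ℕ} (β : MIdx d) : ℤ :=
  β.sum fun j m => match j with
    | Sum.inl k => ((k : ℤ) - 1) * (m : ℤ)
    | Sum.inr _ => -(m : ℤ)

/-- Homogeneity `|β| = α(1 + (k̲−1) Σ_k β(k) − Σ_n β(n)) + 2 Σ_k β(k) + Σ_n |n| β(n)`. -/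
noncomputable def homog {d : ℕ} (α : ℝ) (kb : ℕ) (β : MIdx d) : ℝ :=
  α * (1 + ((kb : ℝ) - 1) * (kSum β : ℝ) - (nSum β : ℝ))
    + 2 * (kSum β : ℝ) + (npSum β : ℝ)

/-- `β` is purely polynomial: `β = δ_n` for some `n ∈ ℕ^{1+d}`. -/
def PurelyPoly {d : ℕ} (β : MIdx d) : Prop :=
  ∃ n : PIdx d, β = Finsupp.single (Sum.inr n) 1

/-- `β` is populated: `β = δ_n`, or `β = δ_{k̲} + δ_{n₁} + ⋯ + δ_{n_{k̲}}`,
or `[β] ≥ 0`. -/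
def Populated {d : ℕ} (kb : ℕ) (β : MIdx d) : Prop :=
  PurelyPoly β ∨ (β (Sum.inl kb) = 1 ∧ kSum β = 1 ∧ nSum β = kb) ∨ 0 ≤ brk β

section Helpers
variable {d : ℕ}

lemma brk_add (a b : MIdx d) : brk (a + b) = brk a + brk b := by
  unfold brk
  apply Finsupp.sum_add_index' <;> intro j <;> cases j <;> intros <;> simp <;> ring

lemma brk_zero : brk (0 : MIdx d) = 0 := by simp [brk]

lemma brk_single_inl (k : ℕ) : brk (Finsupp.single (Sum.inl k : ℕ ⊕ PIdx d) 1) = (k : ℤ) - 1 := by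
  unfold brk; rw [Finsupp.sum_single_index] <;> simp

lemma brk_single_inr (n : PIdx d) : brk (Finsupp.single (Sum.inr n : ℕ ⊕ PIdx d) 1) = -1 := by
  unfold brk; rw [Finsupp.sum_single_index] <;> simp

lemma kSum_add (a b : MIdx d) : kSum (a + b) = kSum a + kSum b := by
  unfold kSum
  apply Finsupp.sum_add_index' <;> intro j <;> cases j <;> intros <;> simp

lemma nSum_add (a b : MIdx d) : nSum (a + b) = nSum a + nSum b := by
  unfold nSum
  apply Finsupp.sum_add_index' <;> intro j <;> cases j <;> intros <;> simp

lemma kSum_single_inl (k m : ℕ) : kSum (Finsupp.single (Sum.inl k : ℕ ⊕ PIdx d) m) = m := by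
  unfold kSum; rw [Finsupp.sum_single_index] <;> simp

lemma kSum_single_inr (n : PIdx d) (m : ℕ) : kSum (Finsupp.single (Sum.inr n : ℕ ⊕ PIdx d) m) = 0 := by
  unfold kSum; rw [Finsupp.sum_single_index] <;> simp

lemma nSum_single_inl (k m : ℕ) : nSum (Finsupp.single (Sum.inl k : ℕ ⊕ PIdx d) m) = 0 := by
  unfold nSum; rw [Finsupp.sum_single_index] <;> simp

lemma nSum_single_inr (n : PIdx d) (m : ℕ) : nSum (Finsupp.single (Sum.inr n : ℕ ⊕ PIdx d) m) = m := by
  unfold nSum; rw [Finsupp.sum_single_index] <;> simp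

lemma fs_peel (γ : MIdx d) (j : ℕ ⊕ PIdx d) (hj : γ j ≠ 0) :
    Finsupp.single j 1 + (γ - Finsupp.single j 1) = γ := by
  ext i
  rcases eq_or_ne i j with rfl | h
  · simp [Finsupp.single_apply, Finsupp.tsub_apply]; omega
  · simp [Finsupp.single_apply, Finsupp.tsub_apply, (Ne.symm h)]

def sz (γ : MIdx d) : ℕ := γ.sum fun _ m => m

lemma sz_add (a b : MIdx d) : sz (a + b) = sz a + sz b := by
  unfold sz; apply Finsupp.sum_add_index' <;> intros <;> simp

lemma sz_single (j : ℕ ⊕ PIdx d) (m : ℕ) : sz (Finsupp.single j m) = m := by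
  unfold sz; exact Finsupp.sum_single_index rfl

lemma eq_zero_of_sz (γ : MIdx d) (h : sz γ = 0) : γ = 0 := by
  by_contra hne
  obtain ⟨j, hj⟩ := Finsupp.ne_iff.1 hne
  simp only [Finsupp.coe_zero, Pi.zero_apply] at hj
  have hmem : j ∈ γ.support := Finsupp.mem_support_iff.2 hj
  have : γ j ≤ sz γ := Finset.single_le_sum (fun i _ => Nat.zero_le _) hmem
  omega

lemma kSum_zero_apply (γ : MIdx d) (h : kSum γ = 0) (k : ℕ) : γ (Sum.inl k) = 0 := by
  by_contra hk
  have hmem : (Sum.inl k : ℕ ⊕ PIdx d) ∈ γ.support := Finsupp.mem_support_iff.2 hk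
  have hle : γ (Sum.inl k) ≤ kSum γ := by
    unfold kSum
    exact Finset.single_le_sum (f := fun j => (fun j m => match j with
      | Sum.inl _ => m | Sum.inr _ => 0) j (γ j)) (fun i _ => Nat.zero_le _) hmem
  omega

lemma brk_eq_neg_nSum (γ : MIdx d) (h : kSum γ = 0) : brk γ = -(nSum γ : ℤ) := by
  have h' := kSum_zero_apply γ h
  unfold brk nSum
  rw [Finsupp.sum, Finsupp.sum, Nat.cast_sum, ← Finset.sum_neg_distrib]
  apply Finset.sum_congr rfl
  intro j hj
  cases j with
  | inl k => exact absurd (h' k) (Finsupp.mem_support_iff.1 hj)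
  | inr n => simp

end Helpers
/-- population is preserved by `Γ`: if `π^{(n)}_{β'} = 0` for all
non-populated `β'` and `π^{(n)}_β ≠ 0 ⟹ [β] ≥ 0 ∨ β = δ_n`, then `Γ` maps the
populated sector `T` into itself and the sector `T̃ = {π : π_β ≠ 0 ⟹ [β] ≥ 0}`
into itself; moreover `D^n T ⊆ T̃` for every `n`. -/
theorem gamma_preserves_population {d : ℕ} (α : ℝ) (kb : ℕ) (hkb : 3 ≤ kb)
    (hα : α < 0) (ha : 0 < 2 + ((kb : ℝ) - 1) * α)
    (π : PIdx d → MIdx d → ℝ)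
    (hπ : ∀ (n : PIdx d) (β : MIdx d), π n β ≠ 0 → (pDeg n : ℝ) < homog α kb β)
    (hπpop : ∀ (n : PIdx d) (β : MIdx d), ¬ Populated kb β → π n β = 0)
    (hπpop' : ∀ (n : PIdx d) (β : MIdx d), π n β ≠ 0 →
      0 ≤ brk β ∨ β = Finsupp.single (Sum.inr n) 1)
    (Γ : MIdx d → MIdx d → ℝ)
    (hΓk : ∀ (k : ℕ) (β : MIdx d),
      Γ β (Finsupp.single (Sum.inl k) 1) =
        if β = Finsupp.single (Sum.inl k) 1 then 1 else 0)
    (hΓn : ∀ (n : PIdx d) (β : MIdx d),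
      Γ β (Finsupp.single (Sum.inr n) 1) =
        (if β = Finsupp.single (Sum.inr n) 1 then 1 else 0) + π n β)
    (hΓ1 : ∀ β : MIdx d, Γ β 0 = if β = 0 then 1 else 0)
    (hΓmul : ∀ γ₁ γ₂ β : MIdx d,
      Γ β (γ₁ + γ₂) = ∑ p ∈ Finset.HasAntidiagonal.antidiagonal β, Γ p.1 γ₁ * Γ p.2 γ₂)
    :
    (∀ β γ : MIdx d, Populated kb γ → Γ β γ ≠ 0 → Populated kb β) ∧
    (∀ β γ : MIdx d, 0 ≤ brk γ → Γ β γ ≠ 0 → 0 ≤ brk β) ∧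
    (∀ (n : PIdx d) (γ : MIdx d), Populated kb γ → 0 < γ (Sum.inr n) →
      0 ≤ brk (γ - Finsupp.single (Sum.inr n) 1)) := by
  clear hπ hα ha hkb
  -- generator facts
  have Gk : ∀ (k : ℕ) (p : MIdx d), Γ p (Finsupp.single (Sum.inl k) 1) ≠ 0 →
      p = Finsupp.single (Sum.inl k) 1 := by
    intro k p h
    by_contra hne
    rw [hΓk, if_neg hne] at h
    exact h rfl
  have Gn : ∀ (n : PIdx d) (p : MIdx d), Γ p (Finsupp.single (Sum.inr n) 1) ≠ 0 →
      p = Finsupp.single (Sum.inr n) 1 ∨ (Populated kb p ∧ 0 ≤ brk p) := by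
    intro n p h
    by_cases hp : p = Finsupp.single (Sum.inr n) 1
    · exact Or.inl hp
    · right
      rw [hΓn, if_neg hp, zero_add] at h
      have hpop : Populated kb p := by
        by_contra hc
        exact h (hπpop n p hc)
      rcases hπpop' n p h with hb | hb
      · exact ⟨hpop, hb⟩
      · exact absurd hb hp
  -- L1 : Γ raises brackets
  have L1 : ∀ N γ, sz γ = N → ∀ β : MIdx d, Γ β γ ≠ 0 → brk γ ≤ brk β := by
    intro N
    induction N using Nat.strong_induction_on with
    | _ N ih =>
      intro γ hN β hβ
      rcases Nat.eq_zero_or_pos N with rfl | hpos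
      · have hγ0 : γ = 0 := eq_zero_of_sz γ hN
        subst hγ0
        rw [hΓ1] at hβ
        by_cases hb : β = 0
        · subst hb; exact le_refl _
        · rw [if_neg hb] at hβ; exact absurd rfl hβ
      · have hγne : γ ≠ 0 := by intro h; subst h; simp [sz] at hN; omega
        obtain ⟨j, hj⟩ := Finsupp.ne_iff.1 hγne
        simp only [Finsupp.coe_zero, Pi.zero_apply] at hj
        have hpeel := fs_peel γ j hj
        have hβ' : (∑ p ∈ Finset.HasAntidiagonal.antidiagonal β,
            Γ p.1 (Finsupp.single j 1) * Γ p.2 (γ - Finsupp.single j 1)) ≠ 0 := by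
          rw [← hΓmul, hpeel]; exact hβ
        obtain ⟨p, hp, hne⟩ := Finset.exists_ne_zero_of_sum_ne_zero hβ'
        have hps : p.1 + p.2 = β := Finset.HasAntidiagonal.mem_antidiagonal.1 hp
        have h1 := left_ne_zero_of_mul hne
        have h2 := right_ne_zero_of_mul hne
        have hszlt : sz (γ - Finsupp.single j 1) < N := by
          have := sz_add (Finsupp.single j 1) (γ - Finsupp.single j 1)
          rw [hpeel, sz_single] at this
          omega
        have IH := ih (sz (γ - Finsupp.single j 1)) hszlt _ rfl p.2 h2
        have hbβ : brk β = brk p.1 + brk p.2 := by rw [← hps, brk_add]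
        have hbγ : brk γ = brk (Finsupp.single j 1) + brk (γ - Finsupp.single j 1) := by
          conv_lhs => rw [← hpeel]
          exact brk_add _ _
        cases j with
        | inl k =>
          have hpe := Gk k p.1 h1
          rw [hbγ, hbβ, hpe]
          linarith
        | inr n =>
          have hb1 : -1 ≤ brk p.1 := by
            rcases Gn n p.1 h1 with h | h
            · rw [h, brk_single_inr]
            · linarith [h.2]
          rw [hbγ, hbβ, brk_single_inr]
          linarith
  -- L2 : on purely polynomial sectors, Γ fixes or strictly raises
  have L2 : ∀ N γ, sz γ = N → kSum γ = 0 → ∀ β : MIdx d, Γ β γ ≠ 0 →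
      β = γ ∨ brk γ + 1 ≤ brk β := by
    intro N
    induction N using Nat.strong_induction_on with
    | _ N ih =>
      intro γ hN hk β hβ
      rcases Nat.eq_zero_or_pos N with rfl | hpos
      · have hγ0 : γ = 0 := eq_zero_of_sz γ hN
        subst hγ0
        rw [hΓ1] at hβ
        by_cases hb : β = 0
        · exact Or.inl hb
        · rw [if_neg hb] at hβ; exact absurd rfl hβ
      · have hγne : γ ≠ 0 := by intro h; subst h; simp [sz] at hN; omega
        obtain ⟨j, hj⟩ := Finsupp.ne_iff.1 hγne
        simp only [Finsupp.coe_zero, Pi.zero_apply] at hj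
        obtain ⟨n, rfl⟩ : ∃ n : PIdx d, j = Sum.inr n := by
          cases j with
          | inl k => exact absurd (kSum_zero_apply γ hk k) hj
          | inr n => exact ⟨n, rfl⟩
        have hpeel := fs_peel γ (Sum.inr n) hj
        have hβ' : (∑ p ∈ Finset.HasAntidiagonal.antidiagonal β,
            Γ p.1 (Finsupp.single (Sum.inr n) 1)
              * Γ p.2 (γ - Finsupp.single (Sum.inr n) 1)) ≠ 0 := by
          rw [← hΓmul, hpeel]; exact hβ
        obtain ⟨p, hp, hne⟩ := Finset.exists_ne_zero_of_sum_ne_zero hβ'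
        have hps : p.1 + p.2 = β := Finset.HasAntidiagonal.mem_antidiagonal.1 hp
        have h1 := left_ne_zero_of_mul hne
        have h2 := right_ne_zero_of_mul hne
        have hszlt : sz (γ - Finsupp.single (Sum.inr n) 1) < N := by
          have := sz_add (Finsupp.single (Sum.inr n : ℕ ⊕ PIdx d) 1)
            (γ - Finsupp.single (Sum.inr n) 1)
          rw [hpeel, sz_single] at this
          omega
        have hk' : kSum (γ - Finsupp.single (Sum.inr n) 1) = 0 := by
          have := kSum_add (Finsupp.single (Sum.inr n : ℕ ⊕ PIdx d) 1)
            (γ - Finsupp.single (Sum.inr n) 1)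
          rw [hpeel, kSum_single_inr] at this
          omega
        have IH := ih _ hszlt _ rfl hk' p.2 h2
        have hbβ : brk β = brk p.1 + brk p.2 := by rw [← hps, brk_add]
        have hbγ : brk γ = -1 + brk (γ - Finsupp.single (Sum.inr n) 1) := by
          conv_lhs => rw [← hpeel]
          rw [brk_add, brk_single_inr]
        rcases Gn n p.1 h1 with hc1 | hc1 <;> rcases IH with hc2 | hc2
        · left; rw [← hps, hc1, hc2]; exact hpeel
        · right; rw [hc1, brk_single_inr] at hbβ; linarith
        · right; rw [hc2] at hbβ; linarith [hc1.2]
        · right; linarith [hc1.2]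
  refine ⟨?_, ?_, ?_⟩
  · -- populated sector preserved
    intro β γ hpop h
    rcases hpop with ⟨n, rfl⟩ | ⟨h1, h2, h3⟩ | hb
    · rw [hΓn] at h
      by_cases hbn : β = Finsupp.single (Sum.inr n) 1
      · exact Or.inl ⟨n, hbn⟩
      · rw [if_neg hbn, zero_add] at h
        by_contra hc
        exact h (hπpop n β hc)
    · have hjk : γ (Sum.inl kb) ≠ 0 := by omega
      have hpk := fs_peel γ (Sum.inl kb) hjk
      have hβ' : (∑ p ∈ Finset.HasAntidiagonal.antidiagonal β,
          Γ p.1 (Finsupp.single (Sum.inl kb) 1)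
            * Γ p.2 (γ - Finsupp.single (Sum.inl kb) 1)) ≠ 0 := by
        rw [← hΓmul, hpk]; exact h
      obtain ⟨p, hp, hne⟩ := Finset.exists_ne_zero_of_sum_ne_zero hβ'
      have hps : p.1 + p.2 = β := Finset.HasAntidiagonal.mem_antidiagonal.1 hp
      have h1' := Gk kb p.1 (left_ne_zero_of_mul hne)
      have hk' : kSum (γ - Finsupp.single (Sum.inl kb) 1) = 0 := by
        have := kSum_add (Finsupp.single (Sum.inl kb : ℕ ⊕ PIdx d) 1)
          (γ - Finsupp.single (Sum.inl kb) 1)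
        rw [hpk, kSum_single_inl] at this
        omega
      have hn'' : nSum (γ - Finsupp.single (Sum.inl kb) 1) = kb := by
        have := nSum_add (Finsupp.single (Sum.inl kb : ℕ ⊕ PIdx d) 1)
          (γ - Finsupp.single (Sum.inl kb) 1)
        rw [hpk, nSum_single_inl] at this
        omega
      have hbrkγ' : brk (γ - Finsupp.single (Sum.inl kb) 1) = -(kb : ℤ) := by
        rw [brk_eq_neg_nSum _ hk', hn'']
      rcases L2 _ _ rfl hk' p.2 (right_ne_zero_of_mul hne) with hc | hc
      · have hβγ : β = γ := by rw [← hps, h1', hc]; exact hpk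
        rw [hβγ]
        exact Or.inr (Or.inl ⟨h1, h2, h3⟩)
      · right; right
        have hbβ : brk β = brk p.1 + brk p.2 := by rw [← hps, brk_add]
        rw [h1', brk_single_inl] at hbβ
        rw [hbrkγ'] at hc
        linarith
    · right; right; exact le_trans hb (L1 _ γ rfl β h)
  · -- T̃ preserved
    intro β γ hγ h
    exact le_trans hγ (L1 _ γ rfl β h)
  · -- D^n T ⊆ T̃
    intro n γ hpop hpos
    have hj : γ (Sum.inr n) ≠ 0 := by omega
    have hpeel := fs_peel γ (Sum.inr n) hj
    have hbγ : brk γ = -1 + brk (γ - Finsupp.single (Sum.inr n) 1) := by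
      conv_lhs => rw [← hpeel]
      rw [brk_add, brk_single_inr]
    rcases hpop with ⟨n', hn'⟩ | ⟨h1, h2, h3⟩ | hb
    · subst hn'
      have he : (Sum.inr n' : ℕ ⊕ PIdx d) = Sum.inr n := by
        by_contra hne
        rw [Finsupp.single_apply, if_neg hne] at hpos
        exact lt_irrefl 0 hpos
      rw [he]
      have hz : Finsupp.single (Sum.inr n : ℕ ⊕ PIdx d) 1
          - Finsupp.single (Sum.inr n) 1 = 0 := by
        ext i; simp [Finsupp.tsub_apply]
      rw [hz, brk_zero]
    · have hjk : γ (Sum.inl kb) ≠ 0 := by omega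
      have hpk := fs_peel γ (Sum.inl kb) hjk
      have hk' : kSum (γ - Finsupp.single (Sum.inl kb) 1) = 0 := by
        have := kSum_add (Finsupp.single (Sum.inl kb : ℕ ⊕ PIdx d) 1)
          (γ - Finsupp.single (Sum.inl kb) 1)
        rw [hpk, kSum_single_inl] at this
        omega
      have hn'' : nSum (γ - Finsupp.single (Sum.inl kb) 1) = kb := by
        have := nSum_add (Finsupp.single (Sum.inl kb : ℕ ⊕ PIdx d) 1)
          (γ - Finsupp.single (Sum.inl kb) 1)
        rw [hpk, nSum_single_inl] at this
        omega
      have hbγ2 : brk γ = ((kb : ℤ) - 1) + brk (γ - Finsupp.single (Sum.inl kb) 1) := by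
        conv_lhs => rw [← hpk]
        rw [brk_add, brk_single_inl]
      rw [brk_eq_neg_nSum _ hk', hn''] at hbγ2
      linarith
    · linarith
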